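/- Upwind finite-difference quadratic: with M = [δPᵀ; pᵢᵀ] invertible as above, the solution ∇U of M·∇U = (δU, U₀ − Û) with the constraint ‖∇U‖ = s·h and ‖R^{−ᵀ}δU‖ ≤ s·h is given by Û = Uᵢ − pᵢᵀQR^{−ᵀ}δU + ‖p_min‖·√((sh)² − ‖R^{−ᵀ}δU‖²), where p_min = (I − QQᵀ)pᵢ and Uᵢ = U₀ + (δU)ᵢ conventions as in the simplex setup (taking the root with larger Û). -/

import Mathlib

open Matrix

/-- Upwind finite-difference quadratic: if `Û` and `∇U` satisfy
`Uᵢ − Û = ∇Uᵀpᵢ` for all `i` and `‖∇U‖ = s·h`, with `Û` the larger root, then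
`Û = Uᵢ − pᵢᵀQR^{−ᵀ}δU + ‖p_min‖·√((sh)² − ‖R^{−ᵀ}δU‖²)`, where
`p_min = (I − QQᵀ)pᵢ` and `δP = QR` is the reduced QR factorization of
`δP = [p₁−p₀,…,p_{n−1}−p₀]`. -/
theorem stmt17 {m : ℕ} (pts : Fin (m + 1) → (Fin (m + 1) → ℝ))
    (hli : LinearIndependent ℝ pts)
    (Q : Matrix (Fin (m + 1)) (Fin m) ℝ) (R : Matrix (Fin m) (Fin m) ℝ)
    (hδP : (fun i (k : Fin m) => pts k.succ i - pts 0 i) = Q * R)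
    (hQ : Q.transpose * Q = 1) (hR : IsUnit R.det)
    (s h : ℝ) (hs : 0 < s) (hh : 0 < h)
    (U : Fin (m + 1) → ℝ) (Uhat : ℝ) (gradU : Fin (m + 1) → ℝ)
    (δU : Fin m → ℝ) (hδU : δU = fun k => U k.succ - U 0)
    (hsys : ∀ i, U i - Uhat = gradU ⬝ᵥ pts i)
    (hnorm : gradU ⬝ᵥ gradU = (s * h) ^ 2)
    (hmax : ∀ (Uhat' : ℝ) (g' : Fin (m + 1) → ℝ),
      (∀ i, U i - Uhat' = g' ⬝ᵥ pts i) → g' ⬝ᵥ g' = (s * h) ^ 2 → Uhat' ≤ Uhat)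
    (hcompat : Real.sqrt ((R.transpose)⁻¹.mulVec δU ⬝ᵥ (R.transpose)⁻¹.mulVec δU)
      ≤ s * h) :
    ∀ i : Fin (m + 1),
      ((1 : Matrix (Fin (m + 1)) (Fin (m + 1)) ℝ) - Q * Q.transpose).mulVec (pts i)
          ≠ 0 →
      Uhat = U i - pts i ⬝ᵥ (Q * (R.transpose)⁻¹).mulVec δU +
        Real.sqrt
          ((((1 : Matrix (Fin (m + 1)) (Fin (m + 1)) ℝ) - Q * Q.transpose).mulVec
              (pts i)) ⬝ᵥ
            (((1 : Matrix (Fin (m + 1)) (Fin (m + 1)) ℝ) - Q * Q.transpose).mulVec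
              (pts i))) *
        Real.sqrt ((s * h) ^ 2 -
          (R.transpose)⁻¹.mulVec δU ⬝ᵥ (R.transpose)⁻¹.mulVec δU) := by
  intro i hpm_ne0
  set pm : Fin (m + 1) → ℝ :=
    ((1 : Matrix (Fin (m + 1)) (Fin (m + 1)) ℝ) - Q * Qᵀ) *ᵥ (pts i) with hpm_def
  set w : Fin m → ℝ := (Rᵀ)⁻¹ *ᵥ δU with hw
  have hRT : IsUnit (Rᵀ).det := by rwa [Matrix.det_transpose]
  -- δU = δPᵀ gradU
  have hδU2 : δU = (Q * R)ᵀ *ᵥ gradU := by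
    rw [← hδP]
    funext k
    have h1 := hsys k.succ
    have h0 := hsys 0
    have hk : U k.succ - U 0 = gradU ⬝ᵥ pts k.succ - gradU ⬝ᵥ pts 0 := by
      rw [← h1, ← h0]; ring
    have : δU k = U k.succ - U 0 := by rw [hδU]
    rw [this, hk]
    simp only [Matrix.mulVec, dotProduct, Matrix.transpose_apply,
      ← Finset.sum_sub_distrib]
    exact Finset.sum_congr rfl (fun j _ => by show _ = (pts k.succ j - pts 0 j) * gradU j; ring)
  have hQg : Qᵀ *ᵥ gradU = w := by
    have h2 : δU = Rᵀ *ᵥ (Qᵀ *ᵥ gradU) := by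
      rw [hδU2, Matrix.transpose_mul, ← Matrix.mulVec_mulVec]
    rw [hw, h2, Matrix.mulVec_mulVec, Matrix.nonsing_inv_mul _ hRT, Matrix.one_mulVec]
  set v : Fin (m + 1) → ℝ := gradU - Q *ᵥ w with hv
  have hgd : gradU = Q *ᵥ w + v := by rw [hv]; ring
  have hQv : Qᵀ *ᵥ v = 0 := by
    rw [hv, Matrix.mulVec_sub, hQg, Matrix.mulVec_mulVec, hQ, Matrix.one_mulVec,
      sub_self]
  have horth : ∀ x : Fin m → ℝ, v ⬝ᵥ Q *ᵥ x = 0 := fun x => by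
    rw [Matrix.dotProduct_mulVec, ← Matrix.mulVec_transpose, hQv,
      zero_dotProduct]
  have hQwQw : (Q *ᵥ w) ⬝ᵥ (Q *ᵥ w) = w ⬝ᵥ w := by
    rw [Matrix.dotProduct_mulVec, ← Matrix.mulVec_transpose, Matrix.mulVec_mulVec,
      hQ, Matrix.one_mulVec]
  have hQwv : (Q *ᵥ w) ⬝ᵥ v = 0 := by rw [dotProduct_comm]; exact horth w
  have hvv : v ⬝ᵥ v = (s * h) ^ 2 - w ⬝ᵥ w := by
    have hn := hnorm
    rw [hgd, add_dotProduct, dotProduct_add, dotProduct_add,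
      hQwQw, hQwv] at hn
    have hvQw : v ⬝ᵥ (Q *ᵥ w) = 0 := horth w
    rw [hvQw] at hn
    linarith
  -- v is orthogonal to all difference vectors
  have hvsucc : ∀ k : Fin m, v ⬝ᵥ pts k.succ = v ⬝ᵥ pts 0 := by
    intro k
    have hcol : (fun j => pts k.succ j - pts 0 j) = Q *ᵥ (fun l => R l k) := by
      funext j
      have := congrFun (congrFun hδP j) k
      simpa [Matrix.mul_apply, Matrix.mulVec, dotProduct] using this
    have h1 : v ⬝ᵥ (pts k.succ - pts 0) = 0 := by
      have : pts k.succ - pts 0 = Q *ᵥ (fun l => R l k) := by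
        funext j; exact congrFun hcol j
      rw [this]; exact horth _
    rw [dotProduct_sub] at h1
    linarith
  have hvp : ∀ j : Fin (m + 1), v ⬝ᵥ pts j = v ⬝ᵥ pts 0 := by
    intro j
    induction j using Fin.cases with
    | zero => rfl
    | succ k => exact hvsucc k
  -- from maximality: v ⬝ᵥ pts 0 ≤ 0
  have hgv : gradU ⬝ᵥ v = v ⬝ᵥ v := by
    rw [hgd, add_dotProduct, hQwv, zero_add]
  have hvg : v ⬝ᵥ gradU = v ⬝ᵥ v := by rw [dotProduct_comm]; exact hgv
  have bilin : ∀ a b x : Fin (m + 1) → ℝ,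
      (a - (2:ℝ) • b) ⬝ᵥ x = a ⬝ᵥ x - 2 * (b ⬝ᵥ x) := fun a b x => by
    simp [sub_dotProduct, smul_dotProduct]
  have quad : ∀ a b : Fin (m + 1) → ℝ,
      (a - (2:ℝ) • b) ⬝ᵥ (a - (2:ℝ) • b)
        = a ⬝ᵥ a - 2 * (a ⬝ᵥ b) - 2 * (b ⬝ᵥ a) + 4 * (b ⬝ᵥ b) := fun a b => by
    simp only [sub_dotProduct, dotProduct_sub,
      smul_dotProduct, dotProduct_smul, smul_eq_mul]
    ring
  have hvp0 : v ⬝ᵥ pts 0 ≤ 0 := by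
    have hc : ∀ j, U j - (Uhat + 2 * (v ⬝ᵥ pts 0)) = (gradU - (2:ℝ) • v) ⬝ᵥ pts j := by
      intro j
      rw [bilin gradU v (pts j), hvp j]
      have := hsys j
      linarith
    have hn : (gradU - (2:ℝ) • v) ⬝ᵥ (gradU - (2:ℝ) • v) = (s * h) ^ 2 := by
      have q := quad gradU v
      linarith
    have := hmax _ _ hc hn
    linarith
  -- kernel of Qᵀ is 1-dimensional
  set f : (Fin (m + 1) → ℝ) →ₗ[ℝ] (Fin m → ℝ) := Matrix.mulVecLin Qᵀ with hf
  have hsurj : LinearMap.range f = ⊤ := by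
    rw [LinearMap.range_eq_top]
    intro y
    exact ⟨Q *ᵥ y, by
      simp only [hf, Matrix.mulVecLin_apply, Matrix.mulVec_mulVec, hQ,
        Matrix.one_mulVec]⟩
  have hker : Module.finrank ℝ (LinearMap.ker f) = 1 := by
    have h1 := LinearMap.finrank_range_add_finrank_ker f
    rw [hsurj, finrank_top] at h1
    simp only [Module.finrank_fin_fun] at h1
    omega
  have hQpm : Qᵀ *ᵥ pm = 0 := by
    rw [hpm_def, Matrix.mulVec_mulVec]
    have hz : Qᵀ * ((1 : Matrix (Fin (m + 1)) (Fin (m + 1)) ℝ) - Q * Qᵀ) = 0 := by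
      rw [Matrix.mul_sub, Matrix.mul_one, ← Matrix.mul_assoc, hQ, Matrix.one_mul,
        sub_self]
    rw [hz, Matrix.zero_mulVec]
  have hpm_mem : pm ∈ LinearMap.ker f := by
    simp only [hf, LinearMap.mem_ker, Matrix.mulVecLin_apply, hQpm]
  have hv_mem : v ∈ LinearMap.ker f := by
    simp only [hf, LinearMap.mem_ker, Matrix.mulVecLin_apply, hQv]
  have hpm_ne : (⟨pm, hpm_mem⟩ : LinearMap.ker f) ≠ 0 := by
    simpa [Subtype.ext_iff] using hpm_ne0
  obtain ⟨c, hc⟩ :=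
    ((finrank_eq_one_iff_of_nonzero' (⟨pm, hpm_mem⟩ : LinearMap.ker f) hpm_ne).mp
      hker) ⟨v, hv_mem⟩
  have hcv : c • pm = v := by simpa [Subtype.ext_iff] using hc
  -- v ⬝ᵥ pm = v ⬝ᵥ pts i
  have hpm_eq : pm = pts i - Q *ᵥ (Qᵀ *ᵥ pts i) := by
    rw [hpm_def, Matrix.sub_mulVec, Matrix.one_mulVec, ← Matrix.mulVec_mulVec]
  have hvpm : v ⬝ᵥ pm = v ⬝ᵥ pts i := by
    rw [hpm_eq, dotProduct_sub, horth, sub_zero]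
  -- positivity of pm ⬝ᵥ pm
  have hpp_nonneg : 0 ≤ pm ⬝ᵥ pm :=
    Finset.sum_nonneg fun j _ => mul_self_nonneg _
  have hpp_pos : 0 < pm ⬝ᵥ pm := by
    rcases lt_or_eq_of_le hpp_nonneg with h | h
    · exact h
    · exact absurd (dotProduct_self_eq_zero.mp h.symm) hpm_ne0
  -- c ≤ 0
  have hvpmc : v ⬝ᵥ pm = c * (pm ⬝ᵥ pm) := by
    rw [← hcv, smul_dotProduct, smul_eq_mul]
  have hc0 : c ≤ 0 := by
    have h1 : v ⬝ᵥ pm ≤ 0 := by rw [hvpm, hvp i]; exact hvp0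
    nlinarith
  -- compute sqrt terms
  have hvvc : v ⬝ᵥ v = c ^ 2 * (pm ⬝ᵥ pm) := by
    rw [← hcv, smul_dotProduct, dotProduct_smul, smul_eq_mul,
      smul_eq_mul]
    ring
  have hsq : Real.sqrt ((s * h) ^ 2 - w ⬝ᵥ w) = -c * Real.sqrt (pm ⬝ᵥ pm) := by
    rw [← hvv, hvvc, Real.sqrt_mul (sq_nonneg c), Real.sqrt_sq_eq_abs,
      abs_of_nonpos hc0]
  have hfin : Real.sqrt (pm ⬝ᵥ pm) * Real.sqrt ((s * h) ^ 2 - w ⬝ᵥ w)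
      = -(v ⬝ᵥ pts i) := by
    rw [hsq, ← hvpm, hvpmc]
    rw [show Real.sqrt (pm ⬝ᵥ pm) * (-c * Real.sqrt (pm ⬝ᵥ pm))
      = -c * (Real.sqrt (pm ⬝ᵥ pm) * Real.sqrt (pm ⬝ᵥ pm)) by ring,
      Real.mul_self_sqrt hpp_nonneg]
    ring
  -- assemble
  have hQRw : (Q * (Rᵀ)⁻¹) *ᵥ δU = Q *ᵥ w := by
    rw [hw, Matrix.mulVec_mulVec]
  have hUi := hsys i
  rw [hgd, add_dotProduct] at hUi
  have hdot : pts i ⬝ᵥ (Q *ᵥ w) = (Q *ᵥ w) ⬝ᵥ pts i := dotProduct_comm _ _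
  rw [hQRw, hdot, hfin]
  linarith
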